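/- For the academic example on ℝ⁸, let w(x) = e₃ + x⁶e₄ + x⁴e₅. Then [e₆, w](x) = e₄ and [e₄, w](x) = e₅ for all x, and consequently, at every point x ∈ ℝ⁸, span{e₇, e₈, e₆, w(x), e₄, e₅} = span{e₃, e₄, e₅, e₆, e₇, e₈} and has dimension 6; i.e., the second derived flag D₂^{(2)} equals the involutive closure D̄₂ = span{∂_{x³},…,∂_{x⁸}}, and dim D₂^{(i)} = dim D₂ + i for i = 1, 2. -/

import Mathlib

/-- The i-th standard basis vector of ℝ⁸ (0-based: `e i` is `e_{i+1}` in the paper's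
1-based numbering of coordinates `x¹,…,x⁸`). -/
noncomputable def e (i : Fin 8) : Fin 8 → ℝ := Pi.single i 1

/-- `w(x) = e₃ + x⁶e₄ + x⁴e₅`. -/
noncomputable def acadW : (Fin 8 → ℝ) → (Fin 8 → ℝ) :=
  fun x => e 2 + x 5 • e 3 + x 3 • e 4

noncomputable def acadL : (Fin 8 → ℝ) →L[ℝ] (Fin 8 → ℝ) :=
  (ContinuousLinearMap.proj (R := ℝ) (φ := fun _ : Fin 8 => ℝ) 5).smulRight (e 3) +
  (ContinuousLinearMap.proj (R := ℝ) (φ := fun _ : Fin 8 => ℝ) 3).smulRight (e 4)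

lemma acadW_eq : acadW = fun x => e 2 + acadL x := by
  funext x
  simp [acadW, acadL, add_assoc]

lemma fderiv_acadW (x : Fin 8 → ℝ) : fderiv ℝ acadW x = acadL := by
  rw [acadW_eq]
  exact (acadL.hasFDerivAt.const_add (e 2)).fderiv

lemma e_apply (i j : Fin 8) : e i j = if j = i then 1 else 0 := by
  simp [e, Pi.single_apply]

lemma bracket_const (v : Fin 8 → ℝ) (x : Fin 8 → ℝ) :
    VectorField.lieBracket ℝ (fun _ => v) acadW x = v 5 • e 3 + v 3 • e 4 := by
  rw [VectorField.lieBracket, fderiv_acadW, fderiv_fun_const]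
  simp [acadL]

lemma li4 (x : Fin 8 → ℝ) : LinearIndependent ℝ ![e 6, e 7, e 5, acadW x] := by
  rw [Fintype.linearIndependent_iff]
  intro g hg
  have h6 := congrFun hg 6
  have h7 := congrFun hg 7
  have h5 := congrFun hg 5
  have h2 := congrFun hg 2
  simp only [Fin.sum_univ_four, Matrix.cons_val_zero, Matrix.cons_val_one, Matrix.head_cons,
    Matrix.cons_val_two, Matrix.tail_cons, Matrix.cons_val_three, Pi.add_apply, Pi.smul_apply,
    Pi.zero_apply, smul_eq_mul, e, acadW, Pi.single_apply] at h6 h7 h5 h2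
  simp (config := { decide := true }) at h6 h7 h5 h2
  intro i
  fin_cases i <;> simp_all

lemma li5 (x : Fin 8 → ℝ) : LinearIndependent ℝ ![e 6, e 7, e 5, acadW x, e 3] := by
  rw [Fintype.linearIndependent_iff]
  intro g hg
  have h6 := congrFun hg 6
  have h7 := congrFun hg 7
  have h5 := congrFun hg 5
  have h2 := congrFun hg 2
  have h3 := congrFun hg 3
  simp only [Fin.sum_univ_five, Matrix.cons_val_zero, Matrix.cons_val_one, Matrix.head_cons,
    Matrix.cons_val_two, Matrix.tail_cons, Matrix.cons_val_three, Matrix.cons_val_four,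
    Pi.add_apply, Pi.smul_apply, Pi.zero_apply, smul_eq_mul, e, acadW,
    Pi.single_apply] at h6 h7 h5 h2 h3
  simp (config := { decide := true }) at h6 h7 h5 h2 h3
  intro i
  fin_cases i <;> simp_all

lemma li6 (x : Fin 8 → ℝ) : LinearIndependent ℝ ![e 6, e 7, e 5, acadW x, e 3, e 4] := by
  rw [Fintype.linearIndependent_iff]
  intro g hg
  have h6 := congrFun hg 6
  have h7 := congrFun hg 7
  have h5 := congrFun hg 5
  have h2 := congrFun hg 2
  have h3 := congrFun hg 3
  have h4 := congrFun hg 4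
  simp only [Fin.sum_univ_six, Matrix.cons_val_zero, Matrix.cons_val_one, Matrix.head_cons,
    Matrix.cons_val_two, Matrix.tail_cons, Matrix.cons_val_three, Matrix.cons_val_four,
    (show (5 : Fin 6) = Fin.succ 4 from rfl), Matrix.cons_val_succ, Pi.add_apply, Pi.smul_apply, Pi.zero_apply, smul_eq_mul, e, acadW,
    Pi.single_apply] at h6 h7 h5 h2 h3 h4
  simp (config := { decide := true }) at h6 h7 h5 h2 h3 h4
  intro i
  fin_cases i <;> simp_all

lemma set4 (x : Fin 8 → ℝ) :
    ({e 6, e 7, e 5, acadW x} : Set (Fin 8 → ℝ)) = Set.range ![e 6, e 7, e 5, acadW x] := by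
  ext y
  simp [Matrix.range_cons, Matrix.range_empty]
  tauto

lemma set5 (x : Fin 8 → ℝ) :
    ({e 6, e 7, e 5, acadW x, e 3} : Set (Fin 8 → ℝ)) =
      Set.range ![e 6, e 7, e 5, acadW x, e 3] := by
  ext y
  simp [Matrix.range_cons, Matrix.range_empty]
  tauto

lemma set6 (x : Fin 8 → ℝ) :
    ({e 6, e 7, e 5, acadW x, e 3, e 4} : Set (Fin 8 → ℝ)) =
      Set.range ![e 6, e 7, e 5, acadW x, e 3, e 4] := by
  ext y
  simp [Matrix.range_cons, Matrix.range_empty]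
  tauto

lemma spanEq (x : Fin 8 → ℝ) :
    Submodule.span ℝ ({e 6, e 7, e 5, acadW x, e 3, e 4} : Set (Fin 8 → ℝ)) =
      Submodule.span ℝ ({e 2, e 3, e 4, e 5, e 6, e 7} : Set (Fin 8 → ℝ)) := by
  have hW : acadW x = e 2 + x 5 • e 3 + x 3 • e 4 := rfl
  apply le_antisymm <;> rw [Submodule.span_le] <;> intro v hv <;>
    simp only [Set.mem_insert_iff, Set.mem_singleton_iff] at hv
  · rcases hv with h | h | h | h | h | h <;> subst h
    · exact Submodule.subset_span (by simp)
    · exact Submodule.subset_span (by simp)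
    · exact Submodule.subset_span (by simp)
    · rw [hW]
      refine add_mem (add_mem (Submodule.subset_span (by simp)) ?_) ?_
      · exact Submodule.smul_mem _ _ (Submodule.subset_span (by simp))
      · exact Submodule.smul_mem _ _ (Submodule.subset_span (by simp))
    · exact Submodule.subset_span (by simp)
    · exact Submodule.subset_span (by simp)
  · rcases hv with h | h | h | h | h | h <;> subst h
    · have h2 : e 2 = acadW x - x 5 • e 3 - x 3 • e 4 := by rw [hW]; abel
      rw [h2]
      refine sub_mem (sub_mem (Submodule.subset_span (by simp)) ?_) ?_
      · exact Submodule.smul_mem _ _ (Submodule.subset_span (by simp))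
      · exact Submodule.smul_mem _ _ (Submodule.subset_span (by simp))
    · exact Submodule.subset_span (by simp)
    · exact Submodule.subset_span (by simp)
    · exact Submodule.subset_span (by simp)
    · exact Submodule.subset_span (by simp)
    · exact Submodule.subset_span (by simp)

/-- For the academic example: `[e₆, w](x) = e₄` and `[e₄, w](x) = e₅` for all `x`, and at
every point `x`, `span{e₇, e₈, e₆, w(x), e₄, e₅} = span{e₃, e₄, e₅, e₆, e₇, e₈}` has
dimension 6; i.e. the second derived flag `D₂^{(2)}` equals the involutive closure
`D̄₂ = span{∂_{x³},…,∂_{x⁸}}`, and `dim D₂^{(i)} = dim D₂ + i` for `i = 1, 2`. -/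
theorem stmt15 :
    (∀ x : Fin 8 → ℝ, VectorField.lieBracket ℝ (fun _ => e 5) acadW x = e 3) ∧
    (∀ x : Fin 8 → ℝ, VectorField.lieBracket ℝ (fun _ => e 3) acadW x = e 4) ∧
    (∀ x : Fin 8 → ℝ,
      Submodule.span ℝ ({e 6, e 7, e 5, acadW x, e 3, e 4} : Set (Fin 8 → ℝ)) =
        Submodule.span ℝ ({e 2, e 3, e 4, e 5, e 6, e 7} : Set (Fin 8 → ℝ)) ∧
      Module.finrank ℝ
        (Submodule.span ℝ ({e 6, e 7, e 5, acadW x, e 3, e 4} : Set (Fin 8 → ℝ))) = 6 ∧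
      Module.finrank ℝ
        (Submodule.span ℝ ({e 6, e 7, e 5, acadW x} : Set (Fin 8 → ℝ))) = 4 ∧
      Module.finrank ℝ
        (Submodule.span ℝ ({e 6, e 7, e 5, acadW x, e 3} : Set (Fin 8 → ℝ))) = 5) := by
  refine ⟨fun x => ?_, fun x => ?_, fun x => ⟨spanEq x, ?_, ?_, ?_⟩⟩
  · rw [bracket_const]
    simp [e_apply]
  · rw [bracket_const]
    simp [e_apply]
  · rw [set6, finrank_span_eq_card (li6 x)]
    simp
  · rw [set4, finrank_span_eq_card (li4 x)]
    simp
  · rw [set5, finrank_span_eq_card (li5 x)]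
    simp
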